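/- Let 0 < q < 1/2 and let τ, μ be distributions over {0,1}ⁿ such that for every i ∈ [n] and every w ∈ {0,1}^{i−1}, either the conditional marginals τ|_i^{x_{[i−1]}=w} and μ|_i^{x_{[i−1]}=w} are equal, or q ≤ μ|_i^{x_{[i−1]}=w}(1) ≤ 1−q. Then Δ_{χ²}(τ,μ) ≥ (1/6)·d_TV(τ,μ)² / log(1/q). -/

import Mathlib

/-- Symmetric chi-square divergence of `Ber p` and `Ber q`. -/
noncomputable def chiSq (p q : ℝ) : ℝ := (p - q) ^ 2 / ((p + q) * (2 - (p + q)))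

/-- Total variation distance between finitely supported distributions. -/
noncomputable def tvDist {α : Type*} [Fintype α] (μ τ : α → ℝ) : ℝ :=
  (1 / 2) * ∑ x, |μ x - τ x|

/-- Probability under `ν` of the prefix event that the first `i` bits agree with `w`. -/
noncomputable def preProb (n : ℕ) (ν : (Fin n → Bool) → ℝ) (i : Fin n) (w : Fin n → Bool) : ℝ :=
  ∑ x, if (∀ j, j < i → x j = w j) then ν x else 0

/-- Conditional probability that bit `i` equals `1`, given the prefix of `w` before `i`. -/
noncomputable def condP (n : ℕ) (ν : (Fin n → Bool) → ℝ) (i : Fin n) (w : Fin n → Bool) : ℝ :=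
  (∑ x, if ((∀ j, j < i → x j = w j) ∧ x i = true) then ν x else 0) / preProb n ν i w

/-- Slice-wise chi-square divergence. -/
noncomputable def deltaChi (n : ℕ) (τ μ : (Fin n → Bool) → ℝ) : ℝ :=
  ∑ i : Fin n, ∑ w, τ w * chiSq (condP n τ i w) (condP n μ i w)


open Real Finset

noncomputable def numP (n : ℕ) (ν : (Fin n → Bool) → ℝ) (i : Fin n) (w : Fin n → Bool) : ℝ :=
  ∑ x, if ((∀ j, j < i → x j = w j) ∧ x i = true) then ν x else 0

lemma condP_eq (n : ℕ) (ν : (Fin n → Bool) → ℝ) (i : Fin n) (w : Fin n → Bool) :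
    condP n ν i w = numP n ν i w / preProb n ν i w := rfl

noncomputable def preN (n k : ℕ) (ν : (Fin n → Bool) → ℝ) (x : Fin n → Bool) : ℝ :=
  ∑ y, if (∀ j : Fin n, (j:ℕ) < k → y j = x j) then ν y else 0

lemma preN_zero (n : ℕ) (ν : (Fin n → Bool) → ℝ) (x : Fin n → Bool) :
    preN n 0 ν x = ∑ y, ν y := by
  unfold preN
  apply Finset.sum_congr rfl
  intro y _
  rw [if_pos (fun j hj => absurd hj (Nat.not_lt_zero _))]

lemma preN_last (n : ℕ) (ν : (Fin n → Bool) → ℝ) (x : Fin n → Bool) :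
    preN n n ν x = ν x := by
  unfold preN
  rw [Finset.sum_eq_single x]
  · rw [if_pos (fun j _ => rfl)]
  · intro y _ hy
    rw [if_neg]
    intro h
    exact hy (funext fun j => h j j.isLt)
  · intro h
    exact absurd (Finset.mem_univ x) h

lemma preN_val (n : ℕ) (ν : (Fin n → Bool) → ℝ) (i : Fin n) (x : Fin n → Bool) :
    preN n i.val ν x = preProb n ν i x := by
  unfold preN preProb
  apply Finset.sum_congr rfl
  intro y _
  congr 1

lemma preN_nonneg (n k : ℕ) (ν : (Fin n → Bool) → ℝ) (hν : ∀ y, 0 ≤ ν y) (x : Fin n → Bool) :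
    0 ≤ preN n k ν x := by
  apply Finset.sum_nonneg
  intro y _
  split <;> simp [hν y]

lemma le_preN (n k : ℕ) (ν : (Fin n → Bool) → ℝ) (hν : ∀ y, 0 ≤ ν y) (x : Fin n → Bool) :
    ν x ≤ preN n k ν x := by
  unfold preN
  have := Finset.single_le_sum (f := fun y => if (∀ j : Fin n, (j:ℕ) < k → y j = x j) then ν y else 0)
    (fun y _ => by
      have h : (0:ℝ) ≤ if (∀ j : Fin n, (j:ℕ) < k → y j = x j) then ν y else 0 := by
        split <;> simp [hν y]
      exact h) (Finset.mem_univ x)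
  simpa using this

lemma preN_pos (n k : ℕ) (ν : (Fin n → Bool) → ℝ) (hν : ∀ y, 0 < ν y) (x : Fin n → Bool) :
    0 < preN n k ν x :=
  lt_of_lt_of_le (hν x) (le_preN n k ν (fun y => (hν y).le) x)

lemma preN_succ (n : ℕ) (i : Fin n) (ν : (Fin n → Bool) → ℝ) (x : Fin n → Bool) :
    preN n (i.val+1) ν x
      = ∑ y, if ((∀ j, j < i → y j = x j) ∧ y i = x i) then ν y else 0 := by
  unfold preN
  apply Finset.sum_congr rfl
  intro y _
  congr 1
  rw [eq_iff_iff]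
  constructor
  · intro h
    exact ⟨fun j hj => h j (Nat.lt_succ_of_lt hj), h i (Nat.lt_succ_self _)⟩
  · intro ⟨h1, h2⟩ j hj
    rcases Nat.lt_succ_iff_lt_or_eq.1 hj with h | h
    · exact h1 j h
    · have : j = i := Fin.ext h
      rw [this]; exact h2

lemma sum_split_bit (n : ℕ) (i : Fin n) (ν : (Fin n → Bool) → ℝ) (x : Fin n → Bool) :
    preProb n ν i x = numP n ν i x
      + ∑ y, if ((∀ j, j < i → y j = x j) ∧ y i = false) then ν y else 0 := by
  unfold preProb numP
  rw [← Finset.sum_add_distrib]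
  apply Finset.sum_congr rfl
  intro y _
  by_cases hpref : (∀ j, j < i → y j = x j)
  · by_cases hb : y i = true
    · rw [if_pos hpref, if_pos ⟨hpref, hb⟩, if_neg (by simp [hb])]
      ring
    · rw [if_pos hpref, if_neg (by simp [hb]), if_pos ⟨hpref, by simpa using hb⟩]
      ring
  · rw [if_neg hpref, if_neg (by simp [hpref]), if_neg (by simp [hpref])]
    ring

lemma numP_nonneg (n : ℕ) (ν : (Fin n → Bool) → ℝ) (hν : ∀ y, 0 ≤ ν y) (i : Fin n)
    (x : Fin n → Bool) : 0 ≤ numP n ν i x := by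
  apply Finset.sum_nonneg; intro y _; split <;> simp [hν y]

lemma numP_le (n : ℕ) (ν : (Fin n → Bool) → ℝ) (hν : ∀ y, 0 ≤ ν y) (i : Fin n)
    (x : Fin n → Bool) : numP n ν i x ≤ preProb n ν i x := by
  rw [sum_split_bit n i ν x]
  have : 0 ≤ ∑ y, if ((∀ j, j < i → y j = x j) ∧ y i = false) then ν y else 0 := by
    apply Finset.sum_nonneg; intro y _; split <;> simp [hν y]
  linarith

lemma condP_mem (n : ℕ) (ν : (Fin n → Bool) → ℝ) (hν : ∀ y, 0 ≤ ν y) (i : Fin n)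
    (x : Fin n → Bool) : 0 ≤ condP n ν i x ∧ condP n ν i x ≤ 1 := by
  rw [condP_eq]
  rcases eq_or_lt_of_le (preN_nonneg n i.val ν hν x) with h | h
  · rw [preN_val] at h
    rw [← h, div_zero]
    norm_num
  · rw [preN_val] at h
    constructor
    · exact div_nonneg (numP_nonneg n ν hν i x) h.le
    · rw [div_le_one h]
      exact numP_le n ν hν i x

lemma numP_pos (n : ℕ) (ν : (Fin n → Bool) → ℝ) (hν : ∀ y, 0 < ν y) (i : Fin n)
    (x : Fin n → Bool) : 0 < numP n ν i x := by
  unfold numP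
  apply Finset.sum_pos' (fun y _ => by split <;> simp [(hν y).le])
  refine ⟨Function.update x i true, Finset.mem_univ _, ?_⟩
  rw [if_pos]
  · exact hν _
  constructor
  · intro j hj
    exact Function.update_of_ne (Fin.ne_of_lt hj) true x
  · exact Function.update_self i true x

lemma condP_pos (n : ℕ) (ν : (Fin n → Bool) → ℝ) (hν : ∀ y, 0 < ν y) (i : Fin n)
    (x : Fin n → Bool) : 0 < condP n ν i x := by
  rw [condP_eq]
  have h1 := numP_pos n ν hν i x
  have h2 : 0 < preProb n ν i x := by
    rw [← preN_val]; exact preN_pos n i.val ν hν x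
  exact div_pos h1 h2

lemma condP_lt_one (n : ℕ) (ν : (Fin n → Bool) → ℝ) (hν : ∀ y, 0 < ν y) (i : Fin n)
    (x : Fin n → Bool) : condP n ν i x < 1 := by
  rw [condP_eq]
  have h2 : 0 < preProb n ν i x := by
    rw [← preN_val]; exact preN_pos n i.val ν hν x
  rw [div_lt_one h2, sum_split_bit n i ν x]
  have : 0 < ∑ y, if ((∀ j, j < i → y j = x j) ∧ y i = false) then ν y else 0 := by
    apply Finset.sum_pos' (fun y _ => by split <;> simp [(hν y).le])
    refine ⟨Function.update x i false, Finset.mem_univ _, ?_⟩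
    rw [if_pos]
    · exact hν _
    constructor
    · intro j hj
      exact Function.update_of_ne (Fin.ne_of_lt hj) false x
    · exact Function.update_self i false x
  linarith

lemma condP_congr (n : ℕ) (ν : (Fin n → Bool) → ℝ) (i : Fin n) (x w : Fin n → Bool)
    (h : ∀ j, j < i → x j = w j) : condP n ν i x = condP n ν i w := by
  unfold condP preProb
  congr 1
  · apply Finset.sum_congr rfl
    intro y _
    congr 1
    rw [eq_iff_iff]
    constructor
    · intro ⟨h1, h2⟩
      exact ⟨fun j hj => (h1 j hj).trans (h j hj), h2⟩
    · intro ⟨h1, h2⟩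
      exact ⟨fun j hj => (h1 j hj).trans (h j hj).symm, h2⟩
  · apply Finset.sum_congr rfl
    intro y _
    congr 1
    rw [eq_iff_iff]
    constructor
    · intro h1 j hj
      exact (h1 j hj).trans (h j hj)
    · intro h1 j hj
      exact (h1 j hj).trans (h j hj).symm

/-- step: `preN (i+1) = preN i * (condP or 1-condP)` when `preProb ≠ 0`. -/
lemma preN_step (n : ℕ) (i : Fin n) (ν : (Fin n → Bool) → ℝ) (x : Fin n → Bool)
    (h : preProb n ν i x ≠ 0) :
    preN n (i.val+1) ν x = preProb n ν i x *
      (if x i = true then condP n ν i x else 1 - condP n ν i x) := by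
  rw [preN_succ]
  by_cases hb : x i = true
  · rw [if_pos hb, condP_eq, mul_div_cancel₀ _ h]
    unfold numP
    apply Finset.sum_congr rfl
    intro y _
    congr 2
    rw [eq_iff_iff, hb]
  · rw [if_neg hb, condP_eq, mul_sub, mul_one, mul_div_cancel₀ _ h]
    have hx : x i = false := by simpa using hb
    have : ∑ y, (if ((∀ j, j < i → y j = x j) ∧ y i = x i) then ν y else 0)
        = ∑ y, (if ((∀ j, j < i → y j = x j) ∧ y i = false) then ν y else 0) := by
      apply Finset.sum_congr rfl
      intro y _
      congr 2
      rw [hx]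
    rw [this]
    have := sum_split_bit n i ν x
    linarith

lemma grouping (n : ℕ) (i : Fin n) (τ : (Fin n → Bool) → ℝ) (hτ0 : ∀ x, 0 ≤ τ x)
    (H : (Fin n → Bool) → ℝ) (hH : ∀ x w, (∀ j, j < i → x j = w j) → H x = H w) :
    ∑ x, τ x * ((if x i = true then (1:ℝ) else 0) * H x)
      = ∑ x, τ x * (condP n τ i x * H x) := by
  classical
  set C : ℝ := ∑ v : Fin n → Bool, if (∀ j, j < i → v j = false) then (1:ℝ) else 0 with hC
  have hK : ∀ x : Fin n → Bool,
      (∑ w : Fin n → Bool, if (∀ j, j < i → x j = w j) then (1:ℝ) else 0) = C := by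
    intro x
    rw [hC]
    apply Fintype.sum_bijective (fun w : Fin n → Bool => fun j => xor (w j) (x j))
    · constructor
      · intro w w' hww'
        funext j
        have h := congrFun hww' j
        simp only [] at h
        cases hxj : x j <;> cases hwj : w j <;> cases hw'j : w' j <;> simp_all
      · intro v
        refine ⟨fun j => xor (v j) (x j), ?_⟩
        funext j
        simp [Bool.xor_assoc]
    · intro w
      congr 1
      rw [eq_iff_iff]
      constructor
      · intro h j hj
        have h2 := h j hj
        simp only []
        cases hxj : x j <;> cases hwj : w j <;> simp_all
      · intro h j hj
        have h2 := h j hj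
        simp only [] at h2
        cases hxj : x j <;> cases hwj : w j <;> simp_all
  have hC1 : (1:ℝ) ≤ C := by
    rw [hC]
    have := Finset.single_le_sum
      (f := fun v : Fin n → Bool => if (∀ j, j < i → v j = false) then (1:ℝ) else 0)
      (fun v _ => by
        have h : (0:ℝ) ≤ if (∀ j, j < i → v j = false) then (1:ℝ) else 0 := by
          split <;> norm_num
        exact h)
      (Finset.mem_univ (fun _ => false))
    simpa using this
  have hCne : C ≠ 0 := by linarith
  -- S1
  have S1 : (∑ x, τ x * ((if x i = true then (1:ℝ) else 0) * H x)) * C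
      = ∑ w, numP n τ i w * H w := by
    have expand : ∀ w, numP n τ i w * H w
        = ∑ x, (if ((∀ j, j < i → x j = w j) ∧ x i = true) then τ x * H w else 0) := by
      intro w
      rw [numP, Finset.sum_mul]
      apply Finset.sum_congr rfl
      intro x _
      split <;> simp
    rw [Finset.sum_congr rfl (fun w _ => expand w), Finset.sum_comm]
    rw [Finset.sum_mul]
    apply Finset.sum_congr rfl
    intro x _
    by_cases hb : x i = true
    · rw [if_pos hb]
      have : ∀ w, (if ((∀ j, j < i → x j = w j) ∧ x i = true) then τ x * H w else 0)
          = (if (∀ j, j < i → x j = w j) then (1:ℝ) else 0) * (τ x * H x) := by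
        intro w
        by_cases hp : (∀ j, j < i → x j = w j)
        · rw [if_pos ⟨hp, hb⟩, if_pos hp, hH x w hp, one_mul]
        · rw [if_neg (by tauto), if_neg hp, zero_mul]
      rw [Finset.sum_congr rfl (fun w _ => this w), ← Finset.sum_mul, hK x]
      ring
    · rw [if_neg hb]
      have : ∀ w, (if ((∀ j, j < i → x j = w j) ∧ x i = true) then τ x * H w else 0) = 0 := by
        intro w
        rw [if_neg (by tauto)]
      rw [Finset.sum_congr rfl (fun w _ => this w), Finset.sum_const_zero]
      ring
  -- S2
  have S2 : (∑ x, τ x * (condP n τ i x * H x)) * C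
      = ∑ w, numP n τ i w * H w := by
    have key : ∀ w, numP n τ i w * H w
        = preProb n τ i w * (condP n τ i w * H w) := by
      intro w
      rcases eq_or_ne (preProb n τ i w) 0 with h0 | h0
      · have hnum : numP n τ i w = 0 := by
          have h1 := numP_nonneg n τ (fun y => hτ0 y) i w
          have h2 := numP_le n τ (fun y => hτ0 y) i w
          rw [h0] at h2
          linarith
        rw [hnum, h0, zero_mul, zero_mul]
      · rw [condP_eq, ← mul_assoc, mul_div_cancel₀ _ h0]
    have expand : ∀ w, preProb n τ i w * (condP n τ i w * H w)
        = ∑ x, (if (∀ j, j < i → x j = w j) then τ x * (condP n τ i w * H w) else 0) := by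
      intro w
      rw [preProb, Finset.sum_mul]
      apply Finset.sum_congr rfl
      intro x _
      split <;> simp
    rw [Finset.sum_congr rfl (fun w _ => key w), Finset.sum_congr rfl (fun w _ => expand w),
      Finset.sum_comm, Finset.sum_mul]
    apply Finset.sum_congr rfl
    intro x _
    have : ∀ w, (if (∀ j, j < i → x j = w j) then τ x * (condP n τ i w * H w) else 0)
        = (if (∀ j, j < i → x j = w j) then (1:ℝ) else 0) * (τ x * (condP n τ i x * H x)) := by
      intro w
      by_cases hp : (∀ j, j < i → x j = w j)
      · rw [if_pos hp, if_pos hp, hH x w hp, condP_congr n τ i x w hp, one_mul]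
      · rw [if_neg hp, if_neg hp, zero_mul]
    rw [Finset.sum_congr rfl (fun w _ => this w), ← Finset.sum_mul, hK x]
    ring
  have := S1.trans S2.symm
  exact mul_right_cancel₀ hCne this

noncomputable def klBer (p q : ℝ) : ℝ := p * Real.log (p/q) + (1-p) * Real.log ((1-p)/(1-q))

lemma klBer_expand (p q : ℝ) (hp0 : 0 ≤ p) (hp1 : p ≤ 1) (hq0 : 0 < q) (hq1 : q < 1) :
    klBer p q = p * (Real.log p - Real.log q)
      + (1-p) * (Real.log (1-p) - Real.log (1-q)) := by
  rw [klBer]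
  congr 1
  · rcases eq_or_lt_of_le hp0 with h | h
    · rw [← h]; ring
    · rw [Real.log_div h.ne' hq0.ne']
  · rcases eq_or_lt_of_le hp1 with h | h
    · rw [h]; ring
    · rw [Real.log_div (by linarith : (1:ℝ)-p ≠ 0) (by linarith : (1:ℝ)-q ≠ 0)]

lemma condb_pos (n : ℕ) (i : Fin n) (τ : (Fin n → Bool) → ℝ) (hτ0 : ∀ y, 0 ≤ τ y)
    (x : Fin n → Bool) (hx : 0 < τ x) :
    0 < (if x i = true then condP n τ i x else 1 - condP n τ i x) := by
  have hpre : 0 < preProb n τ i x := by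
    rw [← preN_val]
    exact lt_of_lt_of_le hx (le_preN n i.val τ hτ0 x)
  by_cases hb : x i = true
  · rw [if_pos hb, condP_eq]
    apply div_pos _ hpre
    unfold numP
    apply lt_of_lt_of_le hx
    have := Finset.single_le_sum
      (f := fun y => if ((∀ j, j < i → y j = x j) ∧ y i = true) then τ y else 0)
      (fun y _ => by
        have h : (0:ℝ) ≤ if ((∀ j, j < i → y j = x j) ∧ y i = true) then τ y else 0 := by
          split <;> simp [hτ0 y]
        exact h) (Finset.mem_univ x)
    simpa [hb] using this
  · rw [if_neg hb, sub_pos, condP_eq, div_lt_one hpre, sum_split_bit n i τ x]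
    have hx' : x i = false := by simpa using hb
    have : τ x ≤ ∑ y, if ((∀ j, j < i → y j = x j) ∧ y i = false) then τ y else 0 := by
      have := Finset.single_le_sum
        (f := fun y => if ((∀ j, j < i → y j = x j) ∧ y i = false) then τ y else 0)
        (fun y _ => by
          have h : (0:ℝ) ≤ if ((∀ j, j < i → y j = x j) ∧ y i = false) then τ y else 0 := by
            split <;> simp [hτ0 y]
          exact h) (Finset.mem_univ x)
      simpa [hx'] using this
    linarith

lemma sliceKL (n : ℕ) (i : Fin n) (μ τ : (Fin n → Bool) → ℝ)
    (hμ0 : ∀ x, 0 < μ x) (hτ0 : ∀ x, 0 ≤ τ x) :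
    ∑ x, τ x * (Real.log (preN n (i.val+1) τ x / preN n (i.val+1) μ x)
             - Real.log (preN n i.val τ x / preN n i.val μ x))
    = ∑ w, τ w * klBer (condP n τ i w) (condP n μ i w) := by
  classical
  -- Step A : rewrite summand
  have stepA : ∑ x, τ x * (Real.log (preN n (i.val+1) τ x / preN n (i.val+1) μ x)
             - Real.log (preN n i.val τ x / preN n i.val μ x))
      = ∑ x, τ x * ((if x i = true then (1:ℝ) else 0)
            * (Real.log (condP n τ i x) - Real.log (condP n μ i x))
          + (1 - (if x i = true then (1:ℝ) else 0))
            * (Real.log (1 - condP n τ i x) - Real.log (1 - condP n μ i x))) := by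
    apply Finset.sum_congr rfl
    intro x _
    rcases eq_or_lt_of_le (hτ0 x) with h0 | h0
    · rw [← h0]; ring
    · congr 1
      have hpreτ : 0 < preProb n τ i x := by
        rw [← preN_val]; exact lt_of_lt_of_le h0 (le_preN n i.val τ hτ0 x)
      have hpreμ : 0 < preProb n μ i x := by
        rw [← preN_val]; exact preN_pos n i.val μ hμ0 x
      have hcτ := condb_pos n i τ hτ0 x h0
      have hcμ : 0 < (if x i = true then condP n μ i x else 1 - condP n μ i x) := by
        by_cases hb : x i = true
        · rw [if_pos hb]; exact condP_pos n μ hμ0 i x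
        · rw [if_neg hb, sub_pos]; exact condP_lt_one n μ hμ0 i x
      rw [preN_step n i τ x hpreτ.ne', preN_step n i μ x hpreμ.ne',
        preN_val, preN_val,
        Real.log_div (mul_pos hpreτ hcτ).ne' (mul_pos hpreμ hcμ).ne',
        Real.log_mul hpreτ.ne' hcτ.ne', Real.log_mul hpreμ.ne' hcμ.ne',
        Real.log_div hpreτ.ne' hpreμ.ne']
      by_cases hb : x i = true
      · simp only [if_pos hb]
        ring
      · simp only [if_neg hb]
        ring
  rw [stepA]
  -- Step B : grouping
  set pτ := fun x => condP n τ i x with hpτ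
  set pμ := fun x => condP n μ i x with hpμ
  set H1 := fun x => Real.log (pτ x) - Real.log (pμ x) with hH1
  set H2 := fun x => Real.log (1 - pτ x) - Real.log (1 - pμ x) with hH2
  have hH1m : ∀ x w, (∀ j, j < i → x j = w j) → H1 x = H1 w := by
    intro x w h
    rw [hH1]
    simp only [hpτ, hpμ]
    rw [condP_congr n τ i x w h, condP_congr n μ i x w h]
  have hH2m : ∀ x w, (∀ j, j < i → x j = w j) → H2 x = H2 w := by
    intro x w h
    rw [hH2]
    simp only [hpτ, hpμ]
    rw [condP_congr n τ i x w h, condP_congr n μ i x w h]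
  have expand : ∑ x, τ x * ((if x i = true then (1:ℝ) else 0) * H1 x
          + (1 - (if x i = true then (1:ℝ) else 0)) * H2 x)
      = (∑ x, τ x * ((if x i = true then (1:ℝ) else 0) * H1 x))
        + (∑ x, τ x * H2 x)
        - (∑ x, τ x * ((if x i = true then (1:ℝ) else 0) * H2 x)) := by
    calc ∑ x, τ x * ((if x i = true then (1:ℝ) else 0) * H1 x
          + (1 - (if x i = true then (1:ℝ) else 0)) * H2 x)
        = ∑ x, (τ x * ((if x i = true then (1:ℝ) else 0) * H1 x) + τ x * H2 x
            - τ x * ((if x i = true then (1:ℝ) else 0) * H2 x)) :=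
          Finset.sum_congr rfl (fun x _ => by ring)
      _ = _ := by rw [Finset.sum_sub_distrib, Finset.sum_add_distrib]
  rw [expand, grouping n i τ hτ0 H1 hH1m, grouping n i τ hτ0 H2 hH2m]
  have recombine : (∑ x, τ x * (condP n τ i x * H1 x)) + (∑ x, τ x * H2 x)
        - (∑ x, τ x * (condP n τ i x * H2 x))
      = ∑ w, τ w * (pτ w * H1 w + (1 - pτ w) * H2 w) := by
    calc ∑ x, τ x * (condP n τ i x * H1 x) + ∑ x, τ x * H2 x
          - ∑ x, τ x * (condP n τ i x * H2 x)
        = ∑ x, (τ x * (condP n τ i x * H1 x) + τ x * H2 x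
            - τ x * (condP n τ i x * H2 x)) := by
          rw [Finset.sum_sub_distrib, Finset.sum_add_distrib]
      _ = _ := Finset.sum_congr rfl (fun x _ => by simp only [hpτ]; ring)
  rw [recombine]
  apply Finset.sum_congr rfl
  intro w _
  congr 1
  rw [klBer_expand (pτ w) (pμ w) (condP_mem n τ (fun y => hτ0 y) i w).1
    (condP_mem n τ (fun y => hτ0 y) i w).2 (condP_pos n μ hμ0 i w) (condP_lt_one n μ hμ0 i w)]
  all_goals simp only [hH1, hH2, hpτ, hpμ]
  all_goals ring

theorem chainRule (n : ℕ) (μ τ : (Fin n → Bool) → ℝ)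
    (hμ0 : ∀ x, 0 < μ x) (hμ1 : ∑ x, μ x = 1)
    (hτ0 : ∀ x, 0 ≤ τ x) (hτ1 : ∑ x, τ x = 1) :
    ∑ x, τ x * Real.log (τ x / μ x)
      = ∑ i : Fin n, ∑ w, τ w * klBer (condP n τ i w) (condP n μ i w) := by
  classical
  set f : ℕ → (Fin n → Bool) → ℝ := fun k x => Real.log (preN n k τ x / preN n k μ x) with hf
  have step1 : ∑ x, τ x * Real.log (τ x / μ x)
      = ∑ x, τ x * ∑ k ∈ Finset.range n, (f (k+1) x - f k x) := by
    apply Finset.sum_congr rfl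
    intro x _
    congr 1
    rw [Finset.sum_range_sub (fun k => f k x)]
    simp only [hf]
    rw [preN_last, preN_last, preN_zero, preN_zero, hτ1, hμ1]
    norm_num
  rw [step1]
  have step2 : ∑ x, τ x * ∑ k ∈ Finset.range n, (f (k+1) x - f k x)
      = ∑ k ∈ Finset.range n, ∑ x, τ x * (f (k+1) x - f k x) := by
    rw [Finset.sum_congr rfl (fun x (_ : x ∈ Finset.univ) => Finset.mul_sum _ _ (τ x))]
    exact Finset.sum_comm
  rw [step2, ← Fin.sum_univ_eq_sum_range (fun k => ∑ x, τ x * (f (k+1) x - f k x)) n]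
  apply Finset.sum_congr rfl
  intro i _
  exact sliceKL n i μ τ hμ0 hτ0


/-- log-sum inequality -/
lemma logSum {X : Type*} [Fintype X] (s : Finset X) (f g : X → ℝ)
    (hf : ∀ x ∈ s, 0 ≤ f x) (hg : ∀ x ∈ s, 0 < g x) (hs : s.Nonempty) :
    (∑ x ∈ s, f x) * Real.log ((∑ x ∈ s, f x) / (∑ x ∈ s, g x)) ≤
      ∑ x ∈ s, f x * Real.log (f x / g x) := by
  have hG : 0 < ∑ x ∈ s, g x := Finset.sum_pos hg hs
  have h := Real.convexOn_mul_log.map_centerMass_le (t := s) (w := g) (p := fun x => f x / g x)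
    (fun i hi => (hg i hi).le) hG (fun i hi => by
      exact Set.mem_Ici.2 (div_nonneg (hf i hi) (hg i hi).le))
  rw [Finset.centerMass, Finset.centerMass] at h
  have e1 : ∀ x ∈ s, g x • (f x / g x) = f x := fun x hx => by
    rw [smul_eq_mul, mul_div_cancel₀ _ (hg x hx).ne']
  have e2 : ∀ x ∈ s, g x • ((fun y => y * Real.log y) ∘ fun x => f x / g x) x
      = f x * Real.log (f x / g x) := fun x hx => by
    simp only [Function.comp, smul_eq_mul]
    rw [← mul_assoc, mul_div_cancel₀ _ (hg x hx).ne']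
  rw [Finset.sum_congr rfl e1, Finset.sum_congr rfl e2] at h
  have h2 : ((∑ x ∈ s, g x)⁻¹ * ((∑ x ∈ s, f x) * Real.log ((∑ x ∈ s, g x)⁻¹ * (∑ x ∈ s, f x)))) ≤ (∑ x ∈ s, g x)⁻¹ • ∑ x ∈ s, f x * Real.log (f x / g x) := by
    simpa [smul_eq_mul, mul_assoc, mul_comm, mul_left_comm] using h
  have := mul_le_mul_of_nonneg_left h2 hG.le
  rw [smul_eq_mul, ← mul_assoc (∑ x ∈ s, g x), mul_inv_cancel₀ hG.ne', one_mul] at this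
  calc (∑ x ∈ s, f x) * Real.log ((∑ x ∈ s, f x) / (∑ x ∈ s, g x))
      = (∑ x ∈ s, f x) * Real.log ((∑ x ∈ s, g x)⁻¹ * (∑ x ∈ s, f x)) := by
        rw [div_eq_inv_mul]
    _ ≤ (∑ x ∈ s, g x) * ((∑ x ∈ s, g x)⁻¹ * ∑ x ∈ s, f x * Real.log (f x / g x)) := this
    _ = ∑ x ∈ s, f x * Real.log (f x / g x) := by
        rw [← mul_assoc, mul_inv_cancel₀ hG.ne', one_mul]



lemma hasDerivG (a : ℝ) (t : ℝ) (ht0 : 0 < t) (ht1 : t < 1) :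
    HasDerivAt (fun t => a * (Real.log a - Real.log t)
        + (1-a) * (Real.log (1-a) - Real.log (1-t)) - 2*(a-t)^2)
      ((t-a) * (1/(t*(1-t)) - 4)) t := by
  have h1 : HasDerivAt (fun t : ℝ => Real.log t) t⁻¹ t := Real.hasDerivAt_log ht0.ne'
  have h2 : HasDerivAt (fun t : ℝ => (1:ℝ) - t) (-1) t := by
    simpa using (hasDerivAt_id t).const_sub 1
  have h3 : HasDerivAt (fun t : ℝ => Real.log (1-t)) ((1-t)⁻¹ * (-1)) t :=
    (Real.hasDerivAt_log (by linarith)).comp t h2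
  have h4 : HasDerivAt (fun t : ℝ => a-t) (-1) t := by
    simpa using (hasDerivAt_id t).const_sub a
  have h5 : HasDerivAt (fun t : ℝ => 2*(a-t)^2) (2*(2*(a-t)*(-1))) t :=
    ((h4.pow 2).const_mul 2).congr_deriv (by ring)
  have h6 : HasDerivAt (fun t => a * (Real.log a - Real.log t)) (a * (0 - t⁻¹)) t :=
    ((h1.const_sub (Real.log a)).const_mul a).congr_deriv (by ring)
  have h7 : HasDerivAt (fun t => (1-a) * (Real.log (1-a) - Real.log (1-t)))
      ((1-a) * (0 - (1-t)⁻¹ * (-1))) t :=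
    ((h3.const_sub (Real.log (1-a))).const_mul (1-a)).congr_deriv (by ring)
  have := (h6.add h7).sub h5
  apply this.congr_deriv
  have h0 : t ≠ 0 := ht0.ne'
  have h1 : (1:ℝ) - t ≠ 0 := by linarith
  have h01 : t * (1-t) ≠ 0 := mul_ne_zero h0 h1
  field_simp
  ring

lemma pinsker_mid (a b : ℝ) (ha0 : 0 < a) (ha1 : a < 1) (hb0 : 0 < b) (hb1 : b < 1) :
    2*(a-b)^2 ≤ klBer a b := by
  set G : ℝ → ℝ := fun t => a * (Real.log a - Real.log t)
        + (1-a) * (Real.log (1-a) - Real.log (1-t)) - 2*(a-t)^2 with hG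
  have hGa : G a = 0 := by simp [hG]
  have hGb : G b = klBer a b - 2*(a-b)^2 := by
    simp only [hG, klBer]
    rw [Real.log_div ha0.ne' hb0.ne', Real.log_div (by linarith) (by linarith)]
  have key : 0 ≤ G b := by
    rcases le_or_gt a b with hab | hab
    · have mono : MonotoneOn G (Set.Icc a b) := by
        apply monotoneOn_of_deriv_nonneg (convex_Icc a b)
        · intro t ht
          exact (hasDerivG a t (lt_of_lt_of_le ha0 ht.1) (lt_of_le_of_lt ht.2 hb1)).continuousAt.continuousWithinAt
        · intro t ht
          rw [interior_Icc] at ht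
          exact (hasDerivG a t (lt_trans ha0 ht.1) (lt_trans ht.2 hb1)).differentiableAt.differentiableWithinAt
        · intro t ht
          rw [interior_Icc] at ht
          have h0t : 0 < t := lt_trans ha0 ht.1
          have ht1' : t < 1 := lt_trans ht.2 hb1
          rw [(hasDerivG a t h0t ht1').deriv]
          have : (0:ℝ) ≤ 1/(t*(1-t)) - 4 := by
            rw [sub_nonneg, le_div_iff₀ (by nlinarith)]
            nlinarith [sq_nonneg (2*t-1)]
          exact mul_nonneg (by linarith [ht.1]) this
      have := mono (Set.left_mem_Icc.2 hab) (Set.right_mem_Icc.2 hab) hab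
      linarith [hGa ▸ this]
    · have anti : AntitoneOn G (Set.Icc b a) := by
        apply antitoneOn_of_deriv_nonpos (convex_Icc b a)
        · intro t ht
          exact (hasDerivG a t (lt_of_lt_of_le hb0 ht.1) (lt_of_le_of_lt ht.2 ha1)).continuousAt.continuousWithinAt
        · intro t ht
          rw [interior_Icc] at ht
          exact (hasDerivG a t (lt_trans hb0 ht.1) (lt_trans ht.2 ha1)).differentiableAt.differentiableWithinAt
        · intro t ht
          rw [interior_Icc] at ht
          have h0t : 0 < t := lt_trans hb0 ht.1
          have ht1' : t < 1 := lt_trans ht.2 ha1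
          rw [(hasDerivG a t h0t ht1').deriv]
          have : (0:ℝ) ≤ 1/(t*(1-t)) - 4 := by
            rw [sub_nonneg, le_div_iff₀ (by nlinarith)]
            nlinarith [sq_nonneg (2*t-1)]
          apply mul_nonpos_of_nonpos_of_nonneg (by linarith [ht.2]) this
      have := anti (Set.left_mem_Icc.2 hab.le) (Set.right_mem_Icc.2 hab.le) hab.le
      linarith [hGa ▸ this]
  linarith [hGb ▸ key]

lemma pinsker_zero (b : ℝ) (hb0 : 0 < b) (hb1 : b < 1) : 2*b^2 ≤ -Real.log (1-b) := by
  set h : ℝ → ℝ := fun t => -Real.log (1-t) - 2*t^2 with hh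
  have hd : ∀ t ∈ Set.Ioo (0:ℝ) 1, HasDerivAt h ((1-t)⁻¹ - 4*t) t := by
    intro t ht
    have h2 : HasDerivAt (fun t : ℝ => (1:ℝ) - t) (-1) t := by
      simpa using (hasDerivAt_id t).const_sub 1
    have h3 : HasDerivAt (fun t : ℝ => Real.log (1-t)) ((1-t)⁻¹ * (-1)) t :=
      (Real.hasDerivAt_log (by linarith [ht.2])).comp t h2
    have h5 : HasDerivAt (fun t : ℝ => 2*t^2) (4*t) t :=
      ((hasDerivAt_pow 2 t).const_mul 2).congr_deriv (by ring)
    exact (h3.neg.sub h5).congr_deriv (by ring)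
  have mono : MonotoneOn h (Set.Icc 0 b) := by
    apply monotoneOn_of_deriv_nonneg (convex_Icc 0 b)
    · intro t ht
      have : t < 1 := lt_of_le_of_lt ht.2 hb1
      have hc : ContinuousAt h t := by
        apply ContinuousAt.sub
        · exact ((Real.continuousAt_log (by linarith : (1:ℝ)-t ≠ 0)).comp
            ((continuous_const.sub continuous_id).continuousAt)).neg
        · exact (continuous_const.mul (continuous_pow 2)).continuousAt
      exact hc.continuousWithinAt
    · intro t ht
      rw [interior_Icc] at ht
      exact (hd t ⟨ht.1, lt_trans ht.2 hb1⟩).differentiableAt.differentiableWithinAt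
    · intro t ht
      rw [interior_Icc] at ht
      have ht1 : t < 1 := lt_trans ht.2 hb1
      rw [(hd t ⟨ht.1, ht1⟩).deriv]
      have : 4*t ≤ (1-t)⁻¹ := by
        rw [← one_div, le_div_iff₀ (by linarith : (0:ℝ) < 1 - t)]
        nlinarith [sq_nonneg (2*t-1)]
      linarith
  have h0 : h 0 = 0 := by simp [hh]
  have := mono (Set.left_mem_Icc.2 hb0.le) (Set.right_mem_Icc.2 hb0.le) hb0.le
  rw [h0] at this
  simp only [hh] at this
  linarith

lemma pinskerBer (a b : ℝ) (ha0 : 0 ≤ a) (ha1 : a ≤ 1) (hb0 : 0 < b) (hb1 : b < 1) :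
    2*(a-b)^2 ≤ klBer a b := by
  rcases eq_or_lt_of_le ha0 with h0 | h0
  · have : klBer a b = -Real.log (1-b) := by
      rw [← h0]; simp [klBer]
    rw [this, ← h0]
    simpa using pinsker_zero b hb0 hb1
  rcases eq_or_lt_of_le ha1 with h1 | h1
  · have : klBer a b = -Real.log b := by
      rw [h1]; simp [klBer, Real.log_inv]
    rw [this, h1]
    have := pinsker_zero (1-b) (by linarith) (by linarith)
    calc 2*(1-b)^2 ≤ -Real.log (1-(1-b)) := by simpa using this
      _ = -Real.log b := by ring_nf
  exact pinsker_mid a b h0 h1 hb0 hb1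

lemma pinskerFin {α : Type*} [Fintype α] [Nonempty α] (μ τ : α → ℝ)
    (hμ0 : ∀ x, 0 < μ x) (hμ1 : ∑ x, μ x = 1)
    (hτ0 : ∀ x, 0 ≤ τ x) (hτ1 : ∑ x, τ x = 1) :
    (tvDist τ μ)^2 ≤ (1/2) * ∑ x, τ x * Real.log (τ x / μ x) := by
  classical
  set A : Finset α := univ.filter (fun x => μ x ≤ τ x) with hA
  set B : Finset α := univ.filter (fun x => ¬ μ x ≤ τ x) with hB
  have hsplitτ : ∑ x ∈ A, τ x + ∑ x ∈ B, τ x = 1 := by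
    rw [hA, hB, Finset.sum_filter_add_sum_filter_not]; exact hτ1
  have hsplitμ : ∑ x ∈ A, μ x + ∑ x ∈ B, μ x = 1 := by
    rw [hA, hB, Finset.sum_filter_add_sum_filter_not]; exact hμ1
  set a := ∑ x ∈ A, τ x with ha
  set b := ∑ x ∈ A, μ x with hb
  have habs : ∑ x, |τ x - μ x| = 2*(a-b) := by
    rw [← Finset.sum_filter_add_sum_filter_not univ (fun x => μ x ≤ τ x) (fun x => |τ x - μ x|)]
    have e1 : ∑ x ∈ A, |τ x - μ x| = a - b := by
      rw [ha, hb, ← Finset.sum_sub_distrib]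
      apply Finset.sum_congr rfl
      intro x hx
      rw [hA, Finset.mem_filter] at hx
      rw [abs_of_nonneg (by linarith [hx.2])]
    have e2 : ∑ x ∈ B, |τ x - μ x| = (1-b) - (1-a) := by
      have : ∑ x ∈ B, |τ x - μ x| = ∑ x ∈ B, (μ x - τ x) := by
        apply Finset.sum_congr rfl
        intro x hx
        rw [hB, Finset.mem_filter] at hx
        rw [abs_of_nonpos (by push_neg at hx; linarith [hx.2])]
        ring
      rw [this, Finset.sum_sub_distrib]
      have : ∑ x ∈ B, μ x = 1 - b := by linarith
      have h2 : ∑ x ∈ B, τ x = 1 - a := by linarith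
      rw [this, h2]
    rw [e1, e2]; ring
  have htv : tvDist τ μ = a - b := by
    rw [tvDist]
    have : ∑ x, |τ x - μ x| = ∑ x, |τ x - μ x| := rfl
    rw [show (∑ x, |τ x - μ x|) = 2*(a-b) from habs]
    ring
  by_cases hAne : A.Nonempty
  · by_cases hBne : B.Nonempty
    · -- main case
      have hb0 : 0 < b := Finset.sum_pos (fun x _ => hμ0 x) hAne
      have hb1 : b < 1 := by
        have : 0 < ∑ x ∈ B, μ x := Finset.sum_pos (fun x _ => hμ0 x) hBne
        linarith
      have ha0 : 0 ≤ a := Finset.sum_nonneg (fun x _ => hτ0 x)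
      have ha1 : a ≤ 1 := by
        have : 0 ≤ ∑ x ∈ B, τ x := Finset.sum_nonneg (fun x _ => hτ0 x)
        linarith
      have hKL : klBer a b ≤ ∑ x, τ x * Real.log (τ x / μ x) := by
        have l1 := logSum A τ μ (fun x _ => hτ0 x) (fun x _ => hμ0 x) hAne
        have l2 := logSum B τ μ (fun x _ => hτ0 x) (fun x _ => hμ0 x) hBne
        have hBτ : ∑ x ∈ B, τ x = 1 - a := by linarith
        have hBμ : ∑ x ∈ B, μ x = 1 - b := by linarith
        rw [hBτ, hBμ] at l2
        rw [← Finset.sum_filter_add_sum_filter_not univ (fun x => μ x ≤ τ x)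
          (fun x => τ x * Real.log (τ x / μ x))]
        rw [klBer]
        exact add_le_add l1 l2
      have := pinskerBer a b ha0 ha1 hb0 hb1
      rw [htv]
      nlinarith
    · -- B empty : a = 1, b = 1
      rw [Finset.not_nonempty_iff_eq_empty] at hBne
      have ha' : a = 1 := by rw [hBne] at hsplitτ; simpa using hsplitτ
      have hb' : b = 1 := by rw [hBne] at hsplitμ; simpa using hsplitμ
      rw [htv, ha', hb']
      have := logSum univ τ μ (fun x _ => hτ0 x) (fun x _ => hμ0 x) univ_nonempty
      rw [hτ1, hμ1] at this
      simp only [div_one, Real.log_one, one_mul] at this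
      simp only [sub_self]
      nlinarith
  · rw [Finset.not_nonempty_iff_eq_empty] at hAne
    have ha' : a = 0 := by rw [ha, hAne]; simp
    have hb' : b = 0 := by rw [hb, hAne]; simp
    rw [htv, ha', hb']
    have := logSum univ τ μ (fun x _ => hτ0 x) (fun x _ => hμ0 x) univ_nonempty
    rw [hτ1, hμ1] at this
    simp only [div_one, Real.log_one, one_mul] at this
    simp only [sub_self]
    nlinarith

lemma chiSq_nonneg (p q : ℝ) (hp0 : 0 ≤ p) (hp1 : p ≤ 1) (hq0 : 0 ≤ q) (hq1 : q ≤ 1) :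
    0 ≤ chiSq p q := by
  apply div_nonneg (sq_nonneg _)
  apply mul_nonneg <;> linarith

lemma klBer_self (p : ℝ) : klBer p p = 0 := by
  rw [klBer]
  rcases eq_or_ne p 0 with h | h
  · simp [h]
  rcases eq_or_ne p 1 with h1 | h1
  · simp [h1]
  rw [div_self h, div_self (by intro hc; apply h1; linarith : (1:ℝ)-p ≠ 0)]
  simp

lemma chiSq_self (p : ℝ) : chiSq p p = 0 := by simp [chiSq]

set_option maxHeartbeats 1000000 in
/-- Pointwise comparison: KL ≤ 12 logb 2 (1/q) * chiSq. -/
lemma kl_le_chi (q p qt : ℝ) (hq0 : 0 < q) (hq1 : q < 1/2)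
    (hp0 : 0 ≤ p) (hp1 : p ≤ 1) (hqt : q ≤ qt) (hqt1 : qt ≤ 1 - q) :
    klBer p qt ≤ 12 * Real.logb 2 (1/q) * chiSq p qt := by
  set L := Real.logb 2 (1/q) with hL
  have hq2 : (2:ℝ) < 1/q := by
    rw [lt_div_iff₀ hq0]; linarith
  have hlog2pos : 0 < Real.log 2 := Real.log_pos one_lt_two
  have hlogpos : 0 < Real.log (1/q) := Real.log_pos (by linarith)
  have hL1 : 1 < L := by
    have h := Real.log_lt_log (by norm_num : (0:ℝ) < 2) hq2
    rw [hL, Real.logb, lt_div_iff₀ hlog2pos]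
    linarith
  have hlog2lt1 : Real.log 2 < 1 := by
    have := Real.log_lt_sub_one_of_pos (by norm_num : (0:ℝ) < 2) (by norm_num)
    linarith
  have hlogq : Real.log (1/q) ≤ L := by
    rw [hL, Real.logb, le_div_iff₀ hlog2pos]
    nlinarith
  have hqt0 : 0 < qt := lt_of_lt_of_le hq0 hqt
  have hqt1' : qt < 1 := by linarith
  have hDpos : 0 < (p + qt) * (2 - (p + qt)) := by
    apply mul_pos <;> linarith
  have hchi0 : 0 ≤ chiSq p qt := chiSq_nonneg p qt hp0 hp1 hqt0.le (by linarith)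
  by_cases hB : 2*qt ≤ p
  · -- regime B : p ≥ 2 qt
    have hp : 0 < p := by linarith
    set s := p - qt with hs
    have hs0 : 0 < s := by simp only [hs]; linarith
    have hps : p ≤ 2*s := by simp only [hs]; linarith
    have term2 : (1-p) * Real.log ((1-p)/(1-qt)) ≤ 0 := by
      apply mul_nonpos_of_nonneg_of_nonpos (by linarith)
      apply Real.log_nonpos (div_nonneg (by linarith) (by linarith))
      rw [div_le_one (by linarith)]; linarith
    have term1 : p * Real.log (p/qt) ≤ p * Real.log (1/q) := by
      apply mul_le_mul_of_nonneg_left _ hp0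
      apply Real.log_le_log (div_pos hp hqt0)
      rw [div_le_div_iff₀ hqt0 hq0]
      nlinarith [mul_le_mul_of_nonneg_right hp1 hq0.le]
    have hKL : klBer p qt ≤ 2*s*L := by
      rw [klBer]
      have : p * Real.log (1/q) ≤ 2*s*L :=
        mul_le_mul hps hlogq hlogpos.le (by linarith)
      linarith
    have hchi : s/6 ≤ chiSq p qt := by
      rw [chiSq, ← hs, div_le_div_iff₀ (by norm_num) hDpos]
      have hD6 : (p+qt)*(2-(p+qt)) ≤ 6*s := by
        nlinarith [mul_le_mul (show p+qt ≤ 3*s by linarith)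
          (show 2-(p+qt) ≤ 2 by linarith) (by linarith : (0:ℝ) ≤ 2-(p+qt))
          (by linarith : (0:ℝ) ≤ 3*s)]
      nlinarith
    calc klBer p qt ≤ 2*s*L := hKL
      _ = 12*L*(s/6) := by ring
      _ ≤ 12*L*chiSq p qt := mul_le_mul_of_nonneg_left hchi (by linarith)
      _ = 12 * Real.logb 2 (1/q) * chiSq p qt := by rw [hL]
  push_neg at hB
  by_cases hB' : 2*(1-qt) ≤ 1-p
  · -- regime B'
    set t := qt - p with ht
    have ht0 : 0 < t := by simp only [ht]; linarith
    have hpt : 1 - p ≤ 2*t := by simp only [ht]; linarith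
    have term1 : p * Real.log (p/qt) ≤ 0 := by
      apply mul_nonpos_of_nonneg_of_nonpos hp0
      apply Real.log_nonpos (div_nonneg hp0 hqt0.le)
      rw [div_le_one hqt0]; linarith
    have term2 : (1-p) * Real.log ((1-p)/(1-qt)) ≤ (1-p) * Real.log (1/q) := by
      apply mul_le_mul_of_nonneg_left _ (by linarith)
      rcases eq_or_lt_of_le hp1 with h | h
      · rw [h]
        simp only [sub_self, zero_div, Real.log_zero]
        exact hlogpos.le
      · apply Real.log_le_log (div_pos (by linarith) (by linarith))
        rw [div_le_div_iff₀ (by linarith) hq0]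
        nlinarith [mul_le_mul_of_nonneg_right (show 1-p ≤ 1 by linarith) hq0.le]
    have hKL : klBer p qt ≤ 2*t*L := by
      rw [klBer]
      have : (1-p) * Real.log (1/q) ≤ 2*t*L :=
        mul_le_mul hpt hlogq hlogpos.le (by linarith)
      linarith
    have hchi : t/6 ≤ chiSq p qt := by
      rw [chiSq]
      have he : (p - qt)^2 = t^2 := by rw [ht]; ring
      rw [he, div_le_div_iff₀ (by norm_num) hDpos]
      have hD6 : (p+qt)*(2-(p+qt)) ≤ 6*t := by
        nlinarith [mul_le_mul (show 2-(p+qt) ≤ 3*t by linarith)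
          (show p+qt ≤ 2 by linarith) (by linarith : (0:ℝ) ≤ p+qt)
          (by linarith : (0:ℝ) ≤ 3*t)]
      nlinarith
    calc klBer p qt ≤ 2*t*L := hKL
      _ = 12*L*(t/6) := by ring
      _ ≤ 12*L*chiSq p qt := mul_le_mul_of_nonneg_left hchi (by linarith)
      _ = 12 * Real.logb 2 (1/q) * chiSq p qt := by rw [hL]
  push_neg at hB'
  -- regime A
  have hqtne : qt ≠ 0 := hqt0.ne'
  have hqtne1 : (1:ℝ) - qt ≠ 0 := by linarith
  have hPearson : klBer p qt ≤ (p-qt)^2 / (qt*(1-qt)) := by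
    have term1 : p * Real.log (p/qt) ≤ p * (p-qt)/qt := by
      rcases eq_or_lt_of_le hp0 with h | h
      · rw [← h]; simp
      · have := Real.log_le_sub_one_of_pos (div_pos h hqt0)
        calc p * Real.log (p/qt) ≤ p * (p/qt - 1) := by
              apply mul_le_mul_of_nonneg_left this hp0
          _ = p * (p-qt)/qt := by field_simp
    have term2 : (1-p) * Real.log ((1-p)/(1-qt)) ≤ (1-p) * (qt-p)/(1-qt) := by
      rcases eq_or_lt_of_le hp1 with h | h
      · rw [h]; simp
      · have := Real.log_le_sub_one_of_pos (div_pos (by linarith : (0:ℝ) < 1-p) (by linarith : (0:ℝ) < 1-qt))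
        calc (1-p) * Real.log ((1-p)/(1-qt)) ≤ (1-p) * ((1-p)/(1-qt) - 1) :=
              mul_le_mul_of_nonneg_left this (by linarith : (0:ℝ) ≤ 1-p)
          _ = (1-p) * (qt-p)/(1-qt) := by
              field_simp
              ring
    have he : p * (p-qt)/qt + (1-p) * (qt-p)/(1-qt) = (p-qt)^2/(qt*(1-qt)) := by
      field_simp
      ring
    rw [klBer]
    linarith
  have h9 : (p-qt)^2 / (qt*(1-qt)) ≤ 9 * chiSq p qt := by
    rw [chiSq, ← mul_div_assoc, div_le_div_iff₀ (mul_pos hqt0 (by linarith : (0:ℝ) < 1-qt)) hDpos]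
    have hD9 : (p+qt)*(2-(p+qt)) ≤ 9*(qt*(1-qt)) := by
      nlinarith [mul_le_mul (show p+qt ≤ 3*qt by linarith)
        (show 2-(p+qt) ≤ 3*(1-qt) by linarith) (by linarith : (0:ℝ) ≤ 2-(p+qt))
        (by linarith : (0:ℝ) ≤ 3*qt)]
    calc (p-qt)^2 * ((p+qt)*(2-(p+qt))) ≤ (p-qt)^2 * (9*(qt*(1-qt))) :=
          mul_le_mul_of_nonneg_left hD9 (sq_nonneg _)
      _ = 9*(p-qt)^2 * (qt*(1-qt)) := by ring
  have hfin : 9 * chiSq p qt ≤ 12 * L * chiSq p qt := by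
    have := mul_le_mul_of_nonneg_right (show (9:ℝ) ≤ 12*L by linarith) hchi0
    linarith
  linarith


theorem stmt_7 (n : ℕ) (q : ℝ) (hq0 : 0 < q) (hq1 : q < 1 / 2)
    (μ τ : (Fin n → Bool) → ℝ)
    (hμ0 : ∀ x, 0 < μ x) (hμ1 : ∑ x, μ x = 1)
    (hτ0 : ∀ x, 0 ≤ τ x) (hτ1 : ∑ x, τ x = 1)
    (hcond : ∀ (i : Fin n) (w : Fin n → Bool),
      condP n τ i w = condP n μ i w ∨ (q ≤ condP n μ i w ∧ condP n μ i w ≤ 1 - q)) :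
    deltaChi n τ μ ≥ (1 / 6) * (tvDist τ μ) ^ 2 / Real.logb 2 (1 / q) := by
  set L := Real.logb 2 (1/q) with hL
  have hq2 : (2:ℝ) < 1/q := by
    rw [lt_div_iff₀ hq0]; linarith
  have hlog2pos : 0 < Real.log 2 := Real.log_pos one_lt_two
  have hLpos : 0 < L := by
    rw [hL, Real.logb, div_pos_iff]
    left
    exact ⟨Real.log_pos (by linarith), hlog2pos⟩
  have h1 := pinskerFin μ τ hμ0 hμ1 hτ0 hτ1
  have h2 := chainRule n μ τ hμ0 hμ1 hτ0 hτ1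
  have h3 : ∑ i : Fin n, ∑ w, τ w * klBer (condP n τ i w) (condP n μ i w)
      ≤ 12 * L * deltaChi n τ μ := by
    rw [deltaChi, Finset.mul_sum]
    apply Finset.sum_le_sum
    intro i _
    rw [Finset.mul_sum]
    apply Finset.sum_le_sum
    intro w _
    rcases hcond i w with h | h
    · rw [h, klBer_self, chiSq_self, mul_zero, mul_zero]
    · have hmem := condP_mem n τ hτ0 i w
      have := kl_le_chi q (condP n τ i w) (condP n μ i w) hq0 hq1 hmem.1 hmem.2 h.1 h.2
      calc τ w * klBer (condP n τ i w) (condP n μ i w)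
          ≤ τ w * (12 * L * chiSq (condP n τ i w) (condP n μ i w)) :=
            mul_le_mul_of_nonneg_left (by rw [hL]; exact this) (hτ0 w)
        _ = 12 * L * (τ w * chiSq (condP n τ i w) (condP n μ i w)) := by ring
  rw [ge_iff_le, div_le_iff₀ hLpos]
  rw [h2] at h1
  nlinarith
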